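/- arXiv:1405.5257 — 7 statements merged into one kernel-verified Lean document; each statement's English description precedes it below -/
import Mathlib

section
/- Let p be a prime, n ≥ 1, and q = p^n. Let E be a field extension of the finite field 𝔽_q, and let K be an intermediate field 𝔽_q ⊆ K ⊆ E such that K is algebraic over 𝔽_q and the degree [K : 𝔽_q] is infinite. Let m ∈ ℕ and let ε₁, …, ε_m ∈ E be elements each of which is transcendental over 𝔽_q. Then K is not contained in the subfield 𝔽_q(ε₁, …, ε_m) of E generated by 𝔽_q and ε₁, …, ε_m. -/
open Polynomial IntermediateField

set_option maxHeartbeats 1000000 in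
set_option synthInstance.maxHeartbeats 400000 in

lemma exists_large_degree {F E : Type*} [Field F] [Fintype F] [Field E] [Algebra F E]
    (K : IntermediateField F E) (halg : Algebra.IsAlgebraic F K)
    (hinf : ¬ FiniteDimensional F K) (D : ℕ) :
    ∃ x, x ∈ K ∧ D < (minpoly F x).natDegree := by
  by_contra h
  push_neg at h
  set q := Fintype.card F with hq
  have hper : ∀ x ∈ K, x ^ q ^ (Nat.factorial D) = x := by
    intro x hx
    have halgx : IsAlgebraic F x := by
      have h1 := halg.isAlgebraic (⟨x, hx⟩ : K)
      exact isAlgebraic_iff.1 h1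
    have hint : IsIntegral F x := halgx.isIntegral
    haveI : FiniteDimensional F F⟮x⟯ := adjoin.finiteDimensional hint
    set d := Module.finrank F F⟮x⟯ with hd
    have hd1 : 0 < d := Module.finrank_pos
    have hdD : d ≤ D := by
      rw [hd, adjoin.finrank hint]; exact h x hx
    obtain ⟨k, hk⟩ := Nat.dvd_factorial hd1 hdD
    haveI : Finite F⟮x⟯ := Module.finite_of_finite F
    haveI : Fintype F⟮x⟯ := Fintype.ofFinite _
    have hcard : Fintype.card F⟮x⟯ = q ^ d := Module.card_eq_pow_finrank
    have hxx : (⟨x, mem_adjoin_simple_self F x⟩ : F⟮x⟯) ^ (q ^ d) ^ k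
        = ⟨x, mem_adjoin_simple_self F x⟩ := by
      rw [← hcard]; exact FiniteField.pow_card_pow k _
    have : x ^ (q ^ d) ^ k = x := congrArg Subtype.val hxx
    rwa [← pow_mul, ← hk] at this
  have hfin : (K : Set E).Finite := by
    have hN : 1 < q ^ (Nat.factorial D) :=
      Nat.one_lt_pow (Nat.factorial_ne_zero D) Fintype.one_lt_card
    have hne : (X ^ q ^ (Nat.factorial D) - X : E[X]) ≠ 0 := by
      intro h0
      have h1 : (X ^ q ^ (Nat.factorial D) : E[X]) = X := by
        rwa [sub_eq_zero] at h0
      have h2 := congrArg Polynomial.natDegree h1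
      rw [natDegree_X_pow, natDegree_X] at h2
      exact hN.ne' h2
    refine (Polynomial.finite_setOf_isRoot hne).subset ?_
    intro y hy
    simp only [Set.mem_setOf_eq, IsRoot, eval_sub, eval_pow, eval_X]
    rw [hper y hy, sub_self]
  haveI : Finite K := hfin.to_subtype
  exact hinf (Module.Finite.of_finite (R := F))


set_option maxHeartbeats 1000000 in
set_option synthInstance.maxHeartbeats 400000 in
theorem aux_not_le_adjoin
    (F : Type*) [Field F] [Fintype F]
    (E : Type*) [Field E] [Algebra F E]
    (K : IntermediateField F E)
    (halg : Algebra.IsAlgebraic F K)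
    (hinf : ¬ FiniteDimensional F K)
    (m : ℕ) (ε : Fin m → E) :
    ¬ K ≤ IntermediateField.adjoin F (Set.range ε) := by
  intro hKL
  classical
  obtain ⟨B, -, hBmax⟩ := exists_maximal_algebraicIndependent (∅ : Set E) (Set.range ε)
    (Set.empty_subset _) ((algebraicIndependent_empty_iff F E).2 (algebraMap F E).injective)
  obtain ⟨⟨hBind, hBsub⟩, hmax⟩ := hBmax
  set S : Set E := Set.range ((↑) : B → E) with hS
  have hSB : S = B := Subtype.range_coe
  set M : IntermediateField F E := IntermediateField.adjoin F S with hM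
  -- every ε i is integral over M
  have hεM : ∀ i, IsIntegral M (ε i) := by
    intro i
    by_contra hni
    have htr : Transcendental M (ε i) := fun hal => hni hal.isIntegral
    have htr' : Transcendental (Algebra.adjoin F S) (ε i) := by
      have h1 : Transcendental (M.toSubalgebra) (ε i) := htr
      exact h1.of_tower_top_of_subalgebra_le (IntermediateField.algebra_adjoin_le_adjoin F S)
    have hopt : AlgebraicIndependent F (fun o : Option B => o.elim (ε i) ((↑) : B → E)) :=
      (hBind.option_iff_transcendental (ε i)).2 htr'
    have hrange : Set.range (fun o : Option B => o.elim (ε i) ((↑) : B → E))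
        = insert (ε i) B := by
      ext y
      constructor
      · rintro ⟨o, rfl⟩
        cases o with
        | none => exact Set.mem_insert _ _
        | some b => exact Set.mem_insert_of_mem _ b.2
      · rintro (rfl | hy)
        · exact ⟨none, rfl⟩
        · exact ⟨some ⟨y, hy⟩, rfl⟩
    have hins : AlgebraicIndependent F ((↑) : (insert (ε i) B : Set E) → E) :=
      hopt.to_subtype_range' hrange
    have hle : insert (ε i) B ⊆ B := hmax ⟨hins, Set.insert_subset ⟨i, rfl⟩ hBsub⟩
      (Set.subset_insert _ _)
    have hiB : ε i ∈ B := hle (Set.mem_insert _ _)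
    have hiM : ε i ∈ M := IntermediateField.subset_adjoin F S (hSB ▸ hiB)
    exact hni (isIntegral_algebraMap (R := M) (x := ⟨ε i, hiM⟩))
  set N : IntermediateField M E := IntermediateField.adjoin M (Set.range ε) with hN
  haveI : Finite (Set.range ε) := (Set.finite_range ε).to_subtype
  haveI hNfd : FiniteDimensional M N :=
    IntermediateField.finiteDimensional_adjoin (fun x hx => by
      obtain ⟨i, rfl⟩ := hx; exact hεM i)
  -- the subalgebra generated by B
  set A₀ : Subalgebra F E := Algebra.adjoin F S with hA₀
  have hle' : A₀ ≤ M.toSubalgebra := IntermediateField.algebra_adjoin_le_adjoin F S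
  haveI : UniqueFactorizationMonoid A₀ := by
    have hiso := AlgebraicIndependent.aevalEquiv hBind
    exact hiso.toMulEquiv.uniqueFactorizationMonoid inferInstance
  haveI : IsIntegrallyClosed A₀ := by
    letI : NormalizationMonoid A₀ := UniqueFactorizationMonoid.normalizationMonoid.toNormalizationMonoid
    haveI : Nonempty (GCDMonoid A₀) := ⟨UniqueFactorizationMonoid.toGCDMonoid _⟩
    exact GCDMonoid.toIsIntegrallyClosed
  letI : Algebra A₀ M := (Subalgebra.inclusion hle').toAlgebra
  haveI : IsScalarTower A₀ M E := IsScalarTower.of_algebraMap_eq fun _ => rfl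
  haveI : NoZeroSMulDivisors A₀ E :=
    ⟨fun {c x} h => by
      rw [Algebra.smul_def, mul_eq_zero] at h
      exact h.imp_left (fun h' => by simpa using h')⟩
  haveI : IsFractionRing A₀ M := by
    refine ⟨fun y => ?_, fun z => ?_, fun {a b} h => ⟨1, ?_⟩⟩
    · refine isUnit_iff_ne_zero.2 fun h0 => ?_
      have hy0 : (y : A₀) ≠ 0 := nonZeroDivisors.coe_ne_zero y
      exact hy0 (Subalgebra.inclusion_injective hle'
        (by rw [map_zero]; exact h0))
    · have hz : (z : E) ∈ IntermediateField.adjoin F (Set.range ((↑) : B → E)) := z.2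
      rw [mem_adjoin_range_iff] at hz
      obtain ⟨r, s, hrs⟩ := hz
      have ha : MvPolynomial.aeval ((↑) : B → E) r ∈ A₀ := by
        rw [hA₀, hS, Algebra.adjoin_range_eq_range_aeval]
        exact ⟨r, rfl⟩
      have hb : MvPolynomial.aeval ((↑) : B → E) s ∈ A₀ := by
        rw [hA₀, hS, Algebra.adjoin_range_eq_range_aeval]
        exact ⟨s, rfl⟩
      by_cases hb0 : MvPolynomial.aeval ((↑) : B → E) s = 0
      · refine ⟨⟨0, 1⟩, ?_⟩
        have : (z : E) = 0 := by rw [hrs, hb0, div_zero]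
        have hz0 : z = 0 := Subtype.ext this
        simp [hz0]
      · refine ⟨⟨⟨_, ha⟩, ⟨⟨_, hb⟩, mem_nonZeroDivisors_of_ne_zero ?_⟩⟩, ?_⟩
        · exact fun h0 => hb0 (by simpa using congrArg Subtype.val h0)
        · refine Subtype.ext ?_
          show (z : E) * MvPolynomial.aeval ((↑) : B → E) s = MvPolynomial.aeval ((↑) : B → E) r
          rw [hrs, div_mul_cancel₀ _ hb0]
    · simp only [OneMemClass.coe_one, one_mul]
      have h' := congrArg Subtype.val h
      exact Subtype.ext h'
  -- pick an element of K of large degree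
  obtain ⟨x, hxK, hxD⟩ := exists_large_degree K halg hinf (Module.finrank M N)
  have hxL : x ∈ IntermediateField.adjoin F (Set.range ε) := hKL hxK
  have hxN : x ∈ N := by
    have hLN : IntermediateField.adjoin F (Set.range ε) ≤ N.restrictScalars F := by
      rw [IntermediateField.adjoin_le_iff]
      exact fun y hy => IntermediateField.subset_adjoin M _ hy
    exact hLN hxL
  have halgx : IsAlgebraic F x := by
    have h1 := halg.isAlgebraic (⟨x, hxK⟩ : K)
    exact isAlgebraic_iff.1 h1
  have hintF : IsIntegral F x := halgx.isIntegral
  have hintM : IsIntegral M x := hintF.tower_top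
  have hintA : IsIntegral A₀ x := hintF.tower_top
  -- degree bound over M
  haveI : FiniteDimensional M M⟮x⟯ := adjoin.finiteDimensional hintM
  have hdeg1 : (minpoly M x).natDegree ≤ Module.finrank M N := by
    rw [← adjoin.finrank hintM]
    have hMxN : M⟮x⟯ ≤ N := by
      rw [adjoin_simple_le_iff]; exact hxN
    exact LinearMap.finrank_le_finrank_of_injective
      (f := (IntermediateField.inclusion hMxN).toLinearMap)
      (fun a b hab => by
        have h' := congrArg Subtype.val hab
        exact Subtype.ext h')
  -- compare minimal polynomials
  have heq : minpoly M x = (minpoly A₀ x).map (algebraMap A₀ M) :=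
    minpoly.isIntegrallyClosed_eq_field_fractions' M hintA
  have hdeg2 : (minpoly A₀ x).natDegree = (minpoly M x).natDegree := by
    rw [heq, (minpoly.monic hintA).natDegree_map]
  have hdvd : minpoly A₀ x ∣ (minpoly F x).map (algebraMap F A₀) :=
    minpoly.isIntegrallyClosed_dvd hintA
      (by rw [aeval_map_algebraMap]; exact minpoly.aeval F x)
  obtain ⟨c, hc⟩ := hdvd
  -- evaluate the variables at 0
  let φ : A₀ →ₐ[F] F :=
    (MvPolynomial.aeval (fun _ => (0 : F))).comp (AlgebraicIndependent.aevalEquiv hBind).symm.toAlgHom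
  have hfac : minpoly F x = (minpoly A₀ x).map φ.toRingHom * c.map φ.toRingHom := by
    have h1 := congrArg (Polynomial.map φ.toRingHom) hc
    rwa [Polynomial.map_mul, Polynomial.map_map,
      (by exact RingHom.ext fun a => φ.commutes a :
        φ.toRingHom.comp (algebraMap F A₀) = RingHom.id F),
      Polynomial.map_id] at h1
  have hirr := minpoly.irreducible hintF
  rcases hirr.isUnit_or_isUnit hfac with hu | hu
  · have h0 : ((minpoly A₀ x).map φ.toRingHom).natDegree = 0 :=
      Polynomial.natDegree_eq_zero_of_isUnit hu
    rw [(minpoly.monic hintA).natDegree_map, hdeg2] at h0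
    exact (minpoly.natDegree_pos hintM).ne' h0
  · have h0 : (c.map φ.toRingHom).natDegree = 0 :=
      Polynomial.natDegree_eq_zero_of_isUnit hu
    have hmne : ((minpoly A₀ x).map φ.toRingHom) ≠ 0 :=
      ((minpoly.monic hintA).map φ.toRingHom).ne_zero
    have hcne : c.map φ.toRingHom ≠ 0 := hu.ne_zero
    have := congrArg Polynomial.natDegree hfac
    rw [Polynomial.natDegree_mul hmne hcne, h0, Nat.add_zero,
      (minpoly.monic hintA).natDegree_map, hdeg2] at this
    rw [this] at hxD
    exact absurd hdeg1 (not_le.2 hxD)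


/-- Let `q = p^n` (`p` prime, `n ≥ 1`) and let `E` be a field extension of
the finite field `𝔽_q`. Let `K` be an intermediate field `𝔽_q ⊆ K ⊆ E` which is algebraic over
`𝔽_q` and of infinite degree over `𝔽_q`. Then for any `m` elements `ε₁, …, ε_m` of `E`, each
transcendental over `𝔽_q`, the field `K` is not contained in `𝔽_q(ε₁, …, ε_m)`. -/
theorem intermediateField_not_le_adjoin_transcendentals
    (p n : ℕ) [Fact p.Prime] (hn : 1 ≤ n)
    (E : Type*) [Field E] [Algebra (GaloisField p n) E]
    (K : IntermediateField (GaloisField p n) E)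
    (halg : Algebra.IsAlgebraic (GaloisField p n) K)
    (hinf : ¬ FiniteDimensional (GaloisField p n) K)
    (m : ℕ) (ε : Fin m → E) (hε : ∀ i, Transcendental (GaloisField p n) (ε i)) :
    ¬ K ≤ IntermediateField.adjoin (GaloisField p n) (Set.range ε) := by
  haveI : Fintype (GaloisField p n) := Fintype.ofFinite _
  exact aux_not_le_adjoin (GaloisField p n) E K halg hinf m ε
end

section
/- Let p be a prime and let L be a field extension of 𝔽_p that is finitely generated as a field extension, i.e., L = 𝔽_p(α₁, …, α_r) for finitely many elements α₁, …, α_r ∈ L. Then there exist a finite subfield k of L and finitely many elements ε₁, …, ε_m ∈ L, each transcendental over k, such that L = k(ε₁, …, ε_m). -/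
/-- Let `L` be a finitely generated field extension of `𝔽_p = ZMod p`
(`p` prime). Then there exist a finite subfield `k ⊆ L` and finitely many elements
`ε₁, …, ε_m ∈ L`, each transcendental over `k`, such that `L = k(ε₁, …, ε_m)`. -/
theorem exists_finite_subfield_and_transcendental_generators
    (p : ℕ) [Fact p.Prime] (L : Type*) [Field L] [Algebra (ZMod p) L]
    (hfg : ∃ s : Finset L, IntermediateField.adjoin (ZMod p) (s : Set L) = ⊤) :
    ∃ (k : Subfield L), Finite k ∧
      ∃ (m : ℕ) (ε : Fin m → L), (∀ i, Transcendental k (ε i)) ∧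
        IntermediateField.adjoin k (Set.range ε) = ⊤ := by
  classical
  obtain ⟨s, hs⟩ := hfg
  haveI : CharP L p := charP_of_injective_algebraMap (algebraMap (ZMod p) L).injective p
  set t : Finset L := s.filter (fun x => IsAlgebraic (ZMod p) x) with ht
  set u : Finset L := s.filter (fun x => ¬ IsAlgebraic (ZMod p) x) with hu
  set k' : IntermediateField (ZMod p) L := IntermediateField.adjoin (ZMod p) (t : Set L) with hk'
  haveI : FiniteDimensional (ZMod p) k' :=
    IntermediateField.finiteDimensional_adjoin
      (fun x hx => ((Finset.mem_filter.mp hx).2).isIntegral)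
  set k : Subfield L := k'.toSubfield with hk
  haveI hfinK : Finite k := Module.finite_of_finite (ZMod p) (M := k')
  haveI : CharP k p := (algebraMap k L).charP Subtype.val_injective p
  letI : Algebra (ZMod p) k :=
    { algebraMap := ZMod.castHom dvd_rfl (k : Subfield L)
      smul := fun a x => a • x
      commutes' := fun a x => mul_comm _ _
      smul_def' := fun a x => by
        obtain ⟨m, rfl⟩ := ZMod.natCast_zmod_surjective (n := p) a
        apply Subtype.ext
        push_cast
        rw [Nat.cast_smul_eq_nsmul, nsmul_eq_mul, map_natCast]
        norm_cast }
  haveI : IsScalarTower (ZMod p) k L := IsScalarTower.of_algebraMap_eq'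
    (Subsingleton.elim (algebraMap (ZMod p) L) ((algebraMap k L).comp (algebraMap (ZMod p) k)))
  haveI : Algebra.IsIntegral (ZMod p) k := Algebra.IsIntegral.of_finite _ _
  refine ⟨k, hfinK, u.card, fun i => (u.equivFin.symm i : L), ?_, ?_⟩
  · intro i h
    have hmem : ((u.equivFin.symm i : L)) ∈ u := (u.equivFin.symm i).2
    have htr : ¬ IsAlgebraic (ZMod p) ((u.equivFin.symm i : L)) := (Finset.mem_filter.mp hmem).2
    exact htr ((isIntegral_trans _ h.isIntegral).isAlgebraic)
  · set ε : Fin u.card → L := fun i => (u.equivFin.symm i : L) with hε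
    have hεrange : (u : Set L) ⊆ Set.range ε := by
      intro x hx
      exact ⟨u.equivFin ⟨x, hx⟩, by simp [hε]⟩
    rw [eq_top_iff]
    intro x _
    have hx : x ∈ IntermediateField.adjoin (ZMod p) (s : Set L) := hs ▸ trivial
    have hx2 : x ∈ Subfield.closure (Set.range (algebraMap (ZMod p) L) ∪ (s : Set L)) := hx
    show x ∈ IntermediateField.adjoin k (Set.range ε)
    have hsub : Set.range (algebraMap (ZMod p) L) ∪ (s : Set L) ⊆
        ((IntermediateField.adjoin k (Set.range ε)).toSubfield : Set L) := by
      rintro y (⟨z, rfl⟩ | hy)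
      · rw [IsScalarTower.algebraMap_apply (ZMod p) k L]
        exact (IntermediateField.adjoin k (Set.range ε)).algebraMap_mem _
      · by_cases hyalg : IsAlgebraic (ZMod p) y
        · have hyt : y ∈ t := Finset.mem_filter.mpr ⟨hy, hyalg⟩
          have hyk : y ∈ k := IntermediateField.subset_adjoin (ZMod p) (t : Set L) hyt
          exact (IntermediateField.adjoin k (Set.range ε)).algebraMap_mem (⟨y, hyk⟩ : k)
        · have hyu : y ∈ u := Finset.mem_filter.mpr ⟨hy, hyalg⟩
          exact IntermediateField.subset_adjoin k (Set.range ε) (hεrange hyu)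
    exact Subfield.closure_le.mpr hsub hx2
end

section
/- Let G be a topological group that is topologically finitely generated, i.e., there exists a finite subset S ⊆ G such that the subgroup generated by S is dense in G. Then for every N ∈ ℕ, the set of open subgroups of G of index at most N is finite. -/
/-- If `G` is a topologically finitely generated topological group
(some finite subset generates a dense subgroup), then for every `N` the collection of
open subgroups of `G` whose index (as the cardinality of the set of left cosets) is at
most `N` is finite. -/
theorem finite_open_subgroups_of_index_le
    (G : Type*) [Group G] [TopologicalSpace G] [IsTopologicalGroup G]
    (S : Finset G) (hS : Dense (Subgroup.closure (S : Set G) : Set G)) (N : ℕ) :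
    {H : Subgroup G | IsOpen (H : Set G) ∧ Cardinal.mk (G ⧸ H) ≤ N}.Finite := by
  classical
  set Γ : Subgroup G := Subgroup.closure (S : Set G) with hΓ
  set 𝒮 : Set (Subgroup G) :=
    {H : Subgroup G | IsOpen (H : Set G) ∧ Cardinal.mk (G ⧸ H) ≤ N} with h𝒮
  -- Step 1: for each H in 𝒮, there is a homomorphism into a fixed finite group
  -- and a point detecting membership in H.
  have hdata : ∀ H ∈ 𝒮, ∃ (f : G →* Equiv.Perm (Fin N)) (p : Fin N),
      ∀ g : G, g ∈ H ↔ f g p = p := by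
    rintro H ⟨hopen, hcard⟩
    have hfin : Finite (G ⧸ H) :=
      Cardinal.lt_aleph0_iff_finite.1 (hcard.trans_lt (Cardinal.nat_lt_aleph0 N))
    have : Fintype (G ⧸ H) := Fintype.ofFinite _
    have hemb : Nonempty ((G ⧸ H) ↪ Fin N) := by
      rw [Function.Embedding.nonempty_iff_card_le, Fintype.card_fin]
      exact_mod_cast (Cardinal.mk_fintype (G ⧸ H)) ▸ hcard
    obtain ⟨e⟩ := hemb
    refine ⟨(Equiv.Perm.viaEmbeddingHom e).comp (MulAction.toPermHom G (G ⧸ H)),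
      e ((1 : G) : G ⧸ H), fun g => ?_⟩
    have happ :
        ((Equiv.Perm.viaEmbeddingHom e).comp (MulAction.toPermHom G (G ⧸ H))) g
            (e ((1 : G) : G ⧸ H))
          = e (g • (((1 : G) : G ⧸ H))) := by
      simpa [Equiv.Perm.viaEmbeddingHom_apply] using
        Equiv.Perm.viaEmbedding_apply (MulAction.toPermHom G (G ⧸ H) g) e
          (((1 : G) : G ⧸ H))
    rw [happ]
    have hsmul : g • (((1 : G) : G ⧸ H)) = ((g : G) : G ⧸ H) := by
      rw [MulAction.Quotient.smul_mk]
      simp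
    rw [hsmul]
    constructor
    · intro hg
      congr 1
      exact (QuotientGroup.eq (s := H)).2 (by simpa using H.inv_mem hg)
    · intro hg
      have := e.injective hg
      have := (QuotientGroup.eq (s := H)).1 this
      simpa using H.inv_mem this
  choose f p hf using hdata
  -- Step 2: the map sending H to (f H restricted to S, p H) into a finite type.
  let F : Subgroup G → ((S → Equiv.Perm (Fin N)) × Option (Fin N)) := fun H =>
    if h : H ∈ 𝒮 then (fun s => f H h s, some (p H h)) else (fun _ => 1, none)
  -- Step 3: each H in 𝒮 equals the closure of its intersection with Γ.
  have hclos : ∀ H ∈ 𝒮, (H : Set G) = closure ((H : Set G) ∩ (Γ : Set G)) := by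
    rintro H ⟨hopen, -⟩
    apply le_antisymm
    · intro x hx
      rw [mem_closure_iff]
      intro U hU hxU
      obtain ⟨y, ⟨hyU, hyH⟩, hyΓ⟩ :=
        hS.inter_open_nonempty (U ∩ (H : Set G)) (hU.inter hopen) ⟨x, hxU, hx⟩
      exact ⟨y, hyU, hyH, hyΓ⟩
    · exact closure_minimal Set.inter_subset_left (H.isClosed_of_isOpen hopen)
  -- Step 4: F is injective on 𝒮.
  have hinj : Set.InjOn F 𝒮 := by
    intro H hH H' hH' hFeq
    simp only [F, dif_pos hH, dif_pos hH'] at hFeq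
    have hfun : (fun s : S => f H hH s) = fun s : S => f H' hH' s :=
      congrArg Prod.fst hFeq
    have hp : p H hH = p H' hH' := by
      have := congrArg Prod.snd hFeq
      simpa using this
    have hEqOnS : Set.EqOn (f H hH) (f H' hH') (S : Set G) := fun g hg =>
      congrFun hfun ⟨g, hg⟩
    have hEqOnΓ : Set.EqOn (f H hH) (f H' hH') (Γ : Set G) :=
      MonoidHom.eqOn_closure hEqOnS
    have hsets : (H : Set G) ∩ (Γ : Set G) = (H' : Set G) ∩ (Γ : Set G) := by
      ext g
      constructor
      · rintro ⟨hgH, hgΓ⟩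
        refine ⟨(hf H' hH' g).2 ?_, hgΓ⟩
        rw [← hEqOnΓ hgΓ, ← hp]
        exact (hf H hH g).1 hgH
      · rintro ⟨hgH', hgΓ⟩
        refine ⟨(hf H hH g).2 ?_, hgΓ⟩
        rw [hEqOnΓ hgΓ, hp]
        exact (hf H' hH' g).1 hgH'
    apply SetLike.ext'
    rw [hclos H hH, hclos H' hH', hsets]
  exact Set.Finite.of_finite_image (Set.toFinite _) hinj
end

section
/- Let K be a field and let a : ℕ → K be a surjective map. For each h ∈ ℕ set P_h = ∏_{i=0}^{h} (Y − a(i)) ∈ K[Y]. Then the subfield of the rational function field K(Y) generated by the prime field of K together with the set {P_h : h ∈ ℕ} contains the field K of constants. -/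
/-- Let `K` be a field and `a : ℕ → K` surjective. For `h : ℕ` put
`P_h = ∏_{i=0}^{h} (Y - a i) ∈ K[Y]`. Then the subfield of the rational function field
`K(Y)` generated by (the prime field and) the polynomials `P_h` contains every constant,
i.e. the image of `K`. -/
theorem constants_mem_subfield_closure_of_products
    (K : Type*) [Field K] (a : ℕ → K) (ha : Function.Surjective a) :
    ∀ c : K, algebraMap K (RatFunc K) c ∈
      Subfield.closure {x : RatFunc K | ∃ h : ℕ,
        x = algebraMap (Polynomial K) (RatFunc K)
          (∏ i ∈ Finset.range (h + 1), (Polynomial.X - Polynomial.C (a i)))} := by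
  intro c
  set S := Subfield.closure {x : RatFunc K | ∃ h : ℕ,
      x = algebraMap (Polynomial K) (RatFunc K)
        (∏ i ∈ Finset.range (h + 1), (Polynomial.X - Polynomial.C (a i)))} with hS
  set φ := algebraMap (Polynomial K) (RatFunc K) with hφ
  have hP : ∀ h : ℕ,
      φ (∏ i ∈ Finset.range (h + 1), (Polynomial.X - Polynomial.C (a i))) ∈ S := by
    intro h
    exact Subfield.subset_closure ⟨h, rfl⟩
  have hPne : ∀ h : ℕ,
      φ (∏ i ∈ Finset.range (h + 1), (Polynomial.X - Polynomial.C (a i))) ≠ 0 := by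
    intro h
    apply RatFunc.algebraMap_ne_zero
    apply Finset.prod_ne_zero_iff.mpr
    intro i _
    exact Polynomial.X_sub_C_ne_zero _
  have hlin : ∀ h : ℕ, φ (Polynomial.X - Polynomial.C (a h)) ∈ S := by
    intro h
    cases h with
    | zero =>
      have := hP 0
      rwa [Finset.prod_range_one] at this
    | succ n =>
      have key : φ (Polynomial.X - Polynomial.C (a (n + 1))) =
          φ (∏ i ∈ Finset.range (n + 1 + 1), (Polynomial.X - Polynomial.C (a i))) /
          φ (∏ i ∈ Finset.range (n + 1), (Polynomial.X - Polynomial.C (a i))) := by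
        rw [eq_div_iff (hPne n), ← map_mul, mul_comm, ← Finset.prod_range_succ]
      rw [key]
      exact S.div_mem (hP (n + 1)) (hP n)
  obtain ⟨j, hj⟩ := ha c
  obtain ⟨h0, hh0⟩ := ha 0
  have hmem := S.sub_mem (hlin h0) (hlin j)
  have : φ (Polynomial.X - Polynomial.C (a h0)) - φ (Polynomial.X - Polynomial.C (a j)) =
      algebraMap K (RatFunc K) c := by
    rw [← map_sub]
    have : (Polynomial.X - Polynomial.C (a h0)) - (Polynomial.X - Polynomial.C (a j)) =
        Polynomial.C c := by
      rw [hj, hh0]; ring_nf; simp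
    rw [this, hφ, RatFunc.algebraMap_C, RatFunc.algebraMap_eq_C]
  rwa [this] at hmem
end

section
/- Let p be a prime, K a countable algebraically closed field of characteristic p, and a : ℕ → K a surjective map. For each h ∈ ℕ set P_h = ∏_{i=0}^{h} (Y − a(i)) ∈ K[Y]. Then there is no subfield F of the rational function field K(Y) such that F is finitely generated as a field extension of the prime field 𝔽_p and F contains P_h for every h ∈ ℕ. -/
open Polynomial
open scoped nonZeroDivisors

/-- `MvPolynomial.X i` is prime. -/
private lemma mv_prime_X {R : Type*} [CommRing R] [IsDomain R] {σ : Type*} (i : σ) :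
    Prime (MvPolynomial.X i : MvPolynomial σ R) := by
  have h : (MvPolynomial.X i : MvPolynomial σ R)
      = MvPolynomial.rename ((↑) : ({i} : Set σ) → σ) (MvPolynomial.X ⟨i, rfl⟩) := by
    simp [MvPolynomial.rename_X]
  rw [h, MvPolynomial.prime_rename_iff]
  let e : MvPolynomial (({i} : Set σ)) R ≃ₐ[R] R[X] :=
    (MvPolynomial.renameEquiv R (Equiv.equivPUnit.{_, 1} _)).trans (MvPolynomial.pUnitAlgEquiv R)
  have he : e (MvPolynomial.X ⟨i, rfl⟩) = X := by
    simp [e, MvPolynomial.renameEquiv_apply, MvPolynomial.rename_X]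
  exact (MulEquiv.prime_iff e.toMulEquiv).mp (he ▸ Polynomial.prime_X)

/-- Eisenstein: `X ^ n - π` is irreducible over the fraction field of a UFD,
for `π` prime and `n > 0`. -/
private lemma irr_X_pow_sub_prime {R : Type*} [CommRing R] [IsDomain R]
    [UniqueFactorizationMonoid R] {π : R} (hπ : Prime π) {n : ℕ} (hn : 0 < n)
    (L : Type*) [Field L] [Algebra R L] [IsFractionRing R L] :
    Irreducible (X ^ n - C (algebraMap R L π)) := by
  have hmonic : (X ^ n - C π : R[X]).Monic := monic_X_pow_sub_C π hn.ne'
  have hirr : Irreducible (X ^ n - C π : R[X]) := by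
    apply irreducible_of_eisenstein_criterion
      ((Ideal.span_singleton_prime hπ.ne_zero).mpr hπ)
    · rw [hmonic.leadingCoeff]
      intro hmem
      rw [Ideal.mem_span_singleton] at hmem
      exact hπ.not_isUnit (isUnit_of_dvd_one hmem)
    · intro k hk
      rw [degree_X_pow_sub_C hn] at hk
      have hkn : k ≠ n := by
        intro h; subst h; exact lt_irrefl _ (by exact_mod_cast hk)
      rw [coeff_sub, coeff_X_pow, if_neg hkn, zero_sub, coeff_C]
      by_cases h0 : k = 0
      · rw [if_pos h0]
        exact neg_mem (Ideal.mem_span_singleton_self π)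
      · rw [if_neg h0, neg_zero]
        exact Ideal.zero_mem _
    · rw [degree_X_pow_sub_C hn]
      exact_mod_cast hn
    · have hc : (X ^ n - C π : R[X]).coeff 0 = -π := by
        rw [coeff_sub, coeff_X_pow, if_neg hn.ne, zero_sub, coeff_C, if_pos rfl]
      rw [hc, Ideal.span_singleton_pow, Ideal.mem_span_singleton]
      rw [dvd_neg]
      rintro ⟨c, hc2⟩
      have h2 : π * 1 = π * (π * c) := by
        rw [mul_one]
        conv_lhs => rw [hc2]
        ring
      have h1 : (1 : R) = π * c := mul_left_cancel₀ hπ.ne_zero h2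
      exact hπ.not_isUnit (isUnit_of_dvd_one ⟨c, h1⟩)
    · exact hmonic.isPrimitive
  have := (hmonic.irreducible_iff_irreducible_map_fraction_map (K := L)).mp hirr
  simpa [Polynomial.map_sub, Polynomial.map_pow] using this

/-- An algebraically closed field of characteristic `p` is not finitely generated
as a field over its prime field. -/
private lemma not_fg_of_isAlgClosed (p : ℕ) [Fact p.Prime] (K : Type*) [Field K]
    [IsAlgClosed K] [CharP K p] (t : Finset K) :
    Subfield.closure (t : Set K) ≠ ⊤ := by
  intro htop
  letI : Algebra (ZMod p) K := ZMod.algebra K p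
  have hadj : IntermediateField.adjoin (ZMod p) (t : Set K) = ⊤ := by
    rw [eq_top_iff]
    intro y _
    have hy : y ∈ Subfield.closure (t : Set K) := htop ▸ Subfield.mem_top y
    exact Subfield.closure_le.mpr
      (fun z hz => IntermediateField.subset_adjoin (ZMod p) (t : Set K) hz) hy
  haveI : Finite (t : Set K) := t.finite_toSet.to_subtype
  obtain ⟨ι, x, hx⟩ := exists_isTranscendenceBasis' (ZMod p) K
  haveI halg : Algebra.IsAlgebraic
      (IntermediateField.adjoin (ZMod p) (Set.range x)) K := hx.isAlgebraic_field
  by_cases hι : Nonempty ι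
  · obtain ⟨i⟩ := hι
    set L := IntermediateField.adjoin (ZMod p) (Set.range x) with hL
    -- K is finite over L
    have hadjL : IntermediateField.adjoin L (t : Set K) = ⊤ := by
      rw [eq_top_iff]
      intro y _
      have h1 : IntermediateField.adjoin (ZMod p) (t : Set K) ≤
          (IntermediateField.adjoin L (t : Set K)).restrictScalars (ZMod p) :=
        IntermediateField.adjoin_le_iff.mpr
          (IntermediateField.subset_adjoin L (t : Set K))
      have := h1 (hadj ▸ IntermediateField.mem_top (x := y))
      exact this
    haveI hfd : FiniteDimensional L K := by
      haveI : FiniteDimensional L (IntermediateField.adjoin L (t : Set K)) :=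
        IntermediateField.finiteDimensional_adjoin
          (fun z _ => (Algebra.IsAlgebraic.isAlgebraic (R := L) z).isIntegral)
      rw [hadjL] at this
      exact IntermediateField.topEquiv.toLinearEquiv.finiteDimensional
    set d := Module.finrank L K with hd
    have hppos : 0 < p ^ d := pow_pos (Fact.out : p.Prime).pos d
    obtain ⟨β, hβ⟩ := IsAlgClosed.exists_pow_nat_eq (x i) hppos
    have hxiL : x i ∈ L := IntermediateField.subset_adjoin (ZMod p) _ ⟨i, rfl⟩
    set b : L := ⟨x i, hxiL⟩ with hb
    -- irreducibility of X ^ p ^ d - C b over L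
    have hirr : Irreducible (X ^ (p ^ d) - C b : Polynomial L) := by
      have h0 := irr_X_pow_sub_prime (mv_prime_X (R := ZMod p) i) hppos
        (FractionRing (MvPolynomial ι (ZMod p)))
      let eR : FractionRing (MvPolynomial ι (ZMod p)) ≃+* L :=
        hx.1.aevalEquivField.toRingEquiv
      have h1 : Irreducible (Polynomial.mapEquiv eR
          (X ^ (p ^ d) - C (algebraMap (MvPolynomial ι (ZMod p))
            (FractionRing (MvPolynomial ι (ZMod p))) (MvPolynomial.X i)))) :=
        (MulEquiv.irreducible_iff (Polynomial.mapEquiv eR)).mpr h0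
      have h2 : Polynomial.mapEquiv eR
          (X ^ (p ^ d) - C (algebraMap (MvPolynomial ι (ZMod p))
            (FractionRing (MvPolynomial ι (ZMod p))) (MvPolynomial.X i)))
          = X ^ (p ^ d) - C b := by
        rw [Polynomial.mapEquiv_apply, Polynomial.map_sub, Polynomial.map_pow,
          Polynomial.map_X, Polynomial.map_C]
        congr 1
        apply congrArg
        apply Subtype.ext
        show ((hx.1.aevalEquivField ((algebraMap (MvPolynomial ι (ZMod p))
            (FractionRing (MvPolynomial ι (ZMod p)))) (MvPolynomial.X i))) : K) = x i
        rw [hx.1.aevalEquivField_algebraMap_apply_coe]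
        simp
      rwa [h2] at h1
    have haev : (Polynomial.aeval β) (X ^ (p ^ d) - C b : Polynomial L) = 0 := by
      have hab : algebraMap L K b = x i := rfl
      simp [map_sub, map_pow, hab, hβ]
    have hmin : minpoly L β = X ^ (p ^ d) - C b :=
      (minpoly.eq_of_irreducible_of_monic hirr haev (monic_X_pow_sub_C b hppos.ne')).symm
    have hle : (minpoly L β).natDegree ≤ d := minpoly.natDegree_le β
    rw [hmin, natDegree_X_pow_sub_C] at hle
    exact absurd hle (not_le.mpr (Nat.lt_pow_self (n := d) (Fact.out : p.Prime).one_lt))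
  · rw [not_nonempty_iff] at hι
    haveI : Algebra.IsAlgebraic (ZMod p) K := (hx.isEmpty_iff_isAlgebraic).mp hι
    haveI : FiniteDimensional (ZMod p) K := by
      haveI : FiniteDimensional (ZMod p) (IntermediateField.adjoin (ZMod p) (t : Set K)) :=
        IntermediateField.finiteDimensional_adjoin
          (fun z _ => (Algebra.IsAlgebraic.isAlgebraic (R := ZMod p) z).isIntegral)
      rw [hadj] at this
      exact IntermediateField.topEquiv.toLinearEquiv.finiteDimensional
    haveI : Finite K := Module.finite_of_finite (ZMod p)
    exact not_finite K

/-- Let `p` be a prime, `K` a countable algebraically closed field of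
characteristic `p`, and `a : ℕ → K` surjective. For `h : ℕ` put
`P_h = ∏_{i=0}^{h} (Y - a i) ∈ K[Y] ⊆ K(Y)`. Then no subfield `F` of the rational
function field `K(Y)` which is finitely generated as a field extension of the prime
field `𝔽_p` (i.e. `F` is the subfield generated by finitely many elements) contains all
the `P_h`. -/
theorem no_finitelyGenerated_subfield_contains_all_products
    (p : ℕ) [Fact p.Prime] (K : Type*) [Field K] [IsAlgClosed K] [CharP K p]
    [Countable K] (a : ℕ → K) (ha : Function.Surjective a) :
    ¬ ∃ F : Subfield (RatFunc K),
        (∃ s : Finset (RatFunc K), F = Subfield.closure (s : Set (RatFunc K))) ∧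
        (∀ h : ℕ, algebraMap (Polynomial K) (RatFunc K)
          (∏ i ∈ Finset.range (h + 1), (Polynomial.X - Polynomial.C (a i))) ∈ F) := by
  rintro ⟨F, ⟨s, hFs⟩, hP⟩
  classical
  -- Step 1: each `X - C (a i)` lies in `F`.
  have h1 : ∀ i : ℕ, algebraMap (Polynomial K) (RatFunc K) (X - C (a i)) ∈ F := by
    intro i
    cases i with
    | zero => simpa [Finset.prod_range_one] using hP 0
    | succ n =>
      have hu := hP n
      have hv := hP (n + 1)
      have hne : algebraMap (Polynomial K) (RatFunc K)
          (∏ i ∈ Finset.range (n + 1), (X - C (a i))) ≠ 0 :=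
        RatFunc.algebraMap_ne_zero
          (Finset.prod_ne_zero_iff.mpr fun j _ => X_sub_C_ne_zero (a j))
      have hfact : algebraMap (Polynomial K) (RatFunc K)
            (∏ i ∈ Finset.range (n + 1 + 1), (X - C (a i)))
          = algebraMap (Polynomial K) (RatFunc K)
            (∏ i ∈ Finset.range (n + 1), (X - C (a i))) *
            algebraMap (Polynomial K) (RatFunc K) (X - C (a (n + 1))) := by
        rw [← map_mul, ← Finset.prod_range_succ]
      have hkey : algebraMap (Polynomial K) (RatFunc K) (X - C (a (n + 1))) =
          (algebraMap (Polynomial K) (RatFunc K)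
            (∏ i ∈ Finset.range (n + 1), (X - C (a i))))⁻¹ *
          algebraMap (Polynomial K) (RatFunc K)
            (∏ i ∈ Finset.range (n + 1 + 1), (X - C (a i))) := by
        rw [hfact, inv_mul_cancel_left₀ hne]
      rw [hkey]
      exact F.mul_mem (F.inv_mem hu) hv
  -- Step 2: all constants `C c` lie in `F`.
  have hC : ∀ c : K, RatFunc.C c ∈ F := by
    intro c
    obtain ⟨i, hi⟩ := ha c
    obtain ⟨j, hj⟩ := ha 0
    have hsub := F.sub_mem (h1 j) (h1 i)
    rw [← map_sub] at hsub
    have heq : (X - C (a j)) - (X - C (a i)) = (C c : Polynomial K) := by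
      rw [hj, map_zero, sub_zero, sub_sub_cancel, hi]
    rw [heq, RatFunc.algebraMap_C] at hsub
    exact hsub
  -- Step 3: coefficient field
  set t : Finset K := s.biUnion
    (fun f => (RatFunc.num f).coeffs ∪ (RatFunc.denom f).coeffs) with ht
  set K₀ : Subfield K := Subfield.closure (t : Set K) with hK₀
  set φ : Polynomial ↥K₀ →+* Polynomial K := Polynomial.mapRingHom (K₀.subtype) with hφdef
  have hφcoe : ∀ q : Polynomial ↥K₀, φ q = Polynomial.map (K₀.subtype) q := by
    intro q; rw [hφdef]; rfl
  have hφ : (Polynomial ↥K₀)⁰ ≤ (Polynomial K)⁰.comap φ := by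
    intro q hq
    rw [mem_nonZeroDivisors_iff_ne_zero] at hq
    refine Submonoid.mem_comap.mpr (mem_nonZeroDivisors_iff_ne_zero.mpr ?_)
    rw [hφcoe]
    exact Polynomial.map_ne_zero hq
  set Φ : RatFunc ↥K₀ →+* RatFunc K := RatFunc.mapRingHom φ hφ with hΦdef
  have hΦ : ∀ n d : Polynomial ↥K₀,
      Φ (algebraMap _ _ n / algebraMap _ _ d)
        = algebraMap _ _ (φ n) / algebraMap _ _ (φ d) := by
    intro n d
    rw [hΦdef]
    show (RatFunc.mapRingHom φ hφ : RatFunc ↥K₀ → RatFunc K) _ = _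
    rw [RatFunc.coe_mapRingHom_eq_coe_map]
    exact RatFunc.map_apply_div φ hφ n d
  have hmem : ∀ f ∈ s, f ∈ Φ.fieldRange := by
    intro f hf
    have hnum : (RatFunc.num f) ∈ Polynomial.lifts (K₀.subtype) := by
      rw [Polynomial.lifts_iff_coeff_lifts]
      intro n
      by_cases h : (RatFunc.num f).coeff n = 0
      · exact ⟨0, by simp [h]⟩
      · refine ⟨⟨(RatFunc.num f).coeff n, ?_⟩, rfl⟩
        rw [hK₀]
        apply Subfield.subset_closure
        exact Finset.mem_coe.mpr (Finset.mem_biUnion.mpr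
          ⟨f, hf, Finset.mem_union_left _ (Polynomial.coeff_mem_coeffs h)⟩)
    have hden : (RatFunc.denom f) ∈ Polynomial.lifts (K₀.subtype) := by
      rw [Polynomial.lifts_iff_coeff_lifts]
      intro n
      by_cases h : (RatFunc.denom f).coeff n = 0
      · exact ⟨0, by simp [h]⟩
      · refine ⟨⟨(RatFunc.denom f).coeff n, ?_⟩, rfl⟩
        rw [hK₀]
        apply Subfield.subset_closure
        exact Finset.mem_coe.mpr (Finset.mem_biUnion.mpr
          ⟨f, hf, Finset.mem_union_right _ (Polynomial.coeff_mem_coeffs h)⟩)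
    obtain ⟨n₀, hn₀⟩ := (Polynomial.mem_lifts _).mp hnum
    obtain ⟨d₀, hd₀⟩ := (Polynomial.mem_lifts _).mp hden
    refine RingHom.mem_fieldRange.mpr ⟨algebraMap _ _ n₀ / algebraMap _ _ d₀, ?_⟩
    rw [hΦ, hφcoe, hφcoe, hn₀, hd₀]
    exact RatFunc.num_div_denom f
  have hFT : F ≤ Φ.fieldRange := by
    rw [hFs]
    exact Subfield.closure_le.mpr (fun f hf => hmem f (Finset.mem_coe.mp hf))
  -- Step 4: every element of `K` lies in `K₀`.
  have hK : ∀ c : K, c ∈ K₀ := by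
    intro c
    obtain ⟨g, hg⟩ := RingHom.mem_fieldRange.mp (hFT (hC c))
    have hg' : algebraMap _ _ (φ (RatFunc.num g)) / algebraMap _ _ (φ (RatFunc.denom g))
        = RatFunc.C c := by
      rw [← hΦ, RatFunc.num_div_denom]
      exact hg
    have hd0 : φ (RatFunc.denom g) ≠ 0 := by
      rw [hφcoe]
      exact Polynomial.map_ne_zero (RatFunc.denom_ne_zero g)
    have hcross : φ (RatFunc.num g) = Polynomial.C c * φ (RatFunc.denom g) := by
      apply RatFunc.algebraMap_injective K
      rw [div_eq_iff (RatFunc.algebraMap_ne_zero hd0)] at hg'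
      rw [map_mul, RatFunc.algebraMap_C, hg']
    obtain ⟨k, hk⟩ : ∃ k, (φ (RatFunc.denom g)).coeff k ≠ 0 := by
      by_contra hall
      push_neg at hall
      exact hd0 (Polynomial.ext fun k => by simp [hall k])
    have hval : c = (φ (RatFunc.num g)).coeff k * ((φ (RatFunc.denom g)).coeff k)⁻¹ := by
      rw [hcross, Polynomial.coeff_C_mul]
      field_simp
    have hnmem : (φ (RatFunc.num g)).coeff k ∈ K₀ := by
      rw [hφcoe, Polynomial.coeff_map]
      exact ((RatFunc.num g).coeff k).2
    have hdmem : (φ (RatFunc.denom g)).coeff k ∈ K₀ := by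
      rw [hφcoe, Polynomial.coeff_map]
      exact ((RatFunc.denom g).coeff k).2
    rw [hval]
    exact K₀.mul_mem hnmem (K₀.inv_mem hdmem)
  -- Conclude with the key lemma.
  have htop : K₀ = ⊤ := eq_top_iff.mpr fun y _ => hK y
  rw [hK₀] at htop
  exact not_fg_of_isAlgClosed p K t htop
end

section
/- Let p be a prime, K a field of characteristic p, and a : ℕ → K any sequence. Let R = K[y] and consider the free module M = R[x] × R[x] of rank two over the polynomial ring R[x]. For h ∈ ℕ set c_h = ∏_{i=0}^{h} (y − a(i)) ∈ R, and for k ∈ ℕ define the R-linear map D_k : M → M by D_k(f, g) = ( H_k(f) + Σ_{h ∈ ℕ, p^h ≤ k} H_{k − p^h}(g)·c_h , H_k(g) ), where H_j denotes the j-th Hasse derivative with respect to x (coefficients in R) and H_0 = id, so D_0 = id. Then for all k, l ∈ ℕ: (i) D_k ∘ D_l = C(k+l, k) · D_{k+l}, where C(k+l, k) is the binomial coefficient reduced modulo p; (ii) D_k ∘ D_l = D_l ∘ D_k; and (iii) for k ≥ 1 and all v ∈ M, D_k(x·v) = x·D_k(v) + D_{k−1}(v). -/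
open Polynomial

/-- Key char-`p` binomial identity: `C(n,m) = C(n-q, m) + [q ≤ m] C(n-q, m-q)` for `q = p^h ≤ n`. -/
lemma key_choose {S : Type*} [CommRing S] (p : ℕ) (hp : p.Prime) [CharP S p]
    (h n m : ℕ) (hq : p ^ h ≤ n) :
    ((n.choose m : S)) = ((n - p ^ h).choose m : S) +
      (if p ^ h ≤ m then (((n - p ^ h).choose (m - p ^ h) : S)) else 0) := by
  haveI : Fact p.Prime := ⟨hp⟩
  haveI : CharP S[X] p := charP_of_injective_ringHom (C_injective (R := S)) p
  have e2 : (X + 1 : S[X]) ^ n = (X + 1) ^ (n - p ^ h) * X ^ (p ^ h) + (X + 1) ^ (n - p ^ h) := by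
    conv_lhs => rw [← Nat.sub_add_cancel hq]
    rw [pow_add, add_pow_char_pow, one_pow, mul_add, mul_one]
  have := congrArg (fun q => Polynomial.coeff q m) e2
  simp only [coeff_X_add_one_pow, coeff_add, coeff_mul_X_pow'] at this
  rw [this, add_comm]

lemma filt_eq (p : ℕ) (hp : 1 < p) {m M : ℕ} (hmM : m ≤ M) :
    (Finset.range (m + 1)).filter (fun h => p ^ h ≤ m) =
      (Finset.range (M + 1)).filter (fun h => p ^ h ≤ m) := by
  ext h
  simp only [Finset.mem_filter, Finset.mem_range]
  constructor
  · rintro ⟨h1, h2⟩; exact ⟨by omega, h2⟩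
  · rintro ⟨h1, h2⟩
    have := Nat.lt_pow_self (n := h) hp
    exact ⟨by omega, h2⟩

lemma hd_comp {R : Type*} [CommSemiring R] (k l : ℕ) (g : R[X]) :
    hasseDeriv k (hasseDeriv l g) = (k + l).choose k • hasseDeriv (k + l) g := by
  have := LinearMap.congr_fun (hasseDeriv_comp (R := R) k l) g
  simpa using this

lemma hd_mul_C {R : Type*} [CommSemiring R] (j : ℕ) (u : R[X]) (c : R) :
    hasseDeriv j (u * C c) = hasseDeriv j u * C c := by
  rw [mul_comm, ← smul_eq_C_mul, map_smul, smul_eq_C_mul, mul_comm]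

lemma hd_X_mul {R : Type*} [CommSemiring R] (j : ℕ) (f : R[X]) :
    hasseDeriv j (X * f) = X * hasseDeriv j f + (if j = 0 then 0 else hasseDeriv (j - 1) f) := by
  cases j with
  | zero => simp
  | succ m =>
    rw [hasseDeriv_mul, Finset.Nat.sum_antidiagonal_eq_sum_range_succ_mk]
    rw [Finset.sum_range_succ', Finset.sum_range_succ']
    have : ∀ i ∈ Finset.range m,
        hasseDeriv (i + 1 + 1) (X : R[X]) * hasseDeriv (m + 1 - (i + 1 + 1)) f = 0 := by
      intro i _
      rw [hasseDeriv_X _ (by omega), zero_mul]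
    rw [Finset.sum_eq_zero this]
    simp only [hasseDeriv_one, derivative_X, hasseDeriv_zero, LinearMap.id_coe, id_eq,
      Nat.succ_ne_zero, if_false, Nat.add_sub_cancel, Nat.sub_zero, one_mul, zero_add]
    rw [add_comm]

/-- The operator `D_k` of Statement 9, on the free module `M = R[x] × R[x]` of rank two
over `R[x]`, where `R = K[y]`.  Here `c_h = ∏_{i=0}^{h} (y - a i) ∈ R` and
`D_k (f, g) = (H_k f + Σ_{h, p^h ≤ k} H_{k - p^h}(g) · c_h , H_k g)`, the `H_j` being
the Hasse derivatives with respect to `x` (the sum over `h ∈ ℕ` with `p^h ≤ k` is finite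
since `p ≥ 2` forces `h < k` for such `h`, so it is computed over `h < k + 1`). -/
noncomputable def strataOp (p : ℕ) {K : Type*} [Field K] (a : ℕ → K) (k : ℕ)
    (v : Polynomial (Polynomial K) × Polynomial (Polynomial K)) :
    Polynomial (Polynomial K) × Polynomial (Polynomial K) :=
  (Polynomial.hasseDeriv k v.1 +
      ∑ h ∈ (Finset.range (k + 1)).filter (fun h => p ^ h ≤ k),
        Polynomial.hasseDeriv (k - p ^ h) v.2 *
          Polynomial.C (∏ i ∈ Finset.range (h + 1),
            (Polynomial.X - Polynomial.C (a i))),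
    Polynomial.hasseDeriv k v.2)

/-- Let `p` be a prime, `K` a field of characteristic `p`, and
`a : ℕ → K` any sequence. The operators `D_k = strataOp p a k` on
`M = K[y][x] × K[y][x]` satisfy, for all `k, l ∈ ℕ`:
(i) `D_k ∘ D_l = C(k+l, k) · D_{k+l}` (the binomial coefficient acting through the
characteristic-`p` ring `K[y][x]`, i.e. reduced mod `p`);
(ii) `D_k ∘ D_l = D_l ∘ D_k`; and
(iii) for `k ≥ 1`, `D_k(x·v) = x·D_k(v) + D_{k-1}(v)`, where `x` multiplies
componentwise.  These are exactly the defining relations of the ring of relative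
differential operators `𝒟_{𝔸²/𝔸¹}`, so they equip the rank-two bundle of the
counterexample with a stratification. -/
theorem strataOp_relations
    (p : ℕ) (hp : p.Prime) (K : Type*) [Field K] [CharP K p] (a : ℕ → K) :
    (∀ k l : ℕ, ∀ v : Polynomial (Polynomial K) × Polynomial (Polynomial K),
      strataOp p a k (strataOp p a l v) =
        (((k + l).choose k : Polynomial (Polynomial K))) • strataOp p a (k + l) v) ∧
    (∀ k l : ℕ, ∀ v : Polynomial (Polynomial K) × Polynomial (Polynomial K),
      strataOp p a k (strataOp p a l v) = strataOp p a l (strataOp p a k v)) ∧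
    (∀ k : ℕ, 1 ≤ k → ∀ v : Polynomial (Polynomial K) × Polynomial (Polynomial K),
      strataOp p a k (Polynomial.X * v.1, Polynomial.X * v.2) =
        (Polynomial.X * (strataOp p a k v).1, Polynomial.X * (strataOp p a k v).2) +
          strataOp p a (k - 1) v) := by
  haveI : CharP (Polynomial K) p := charP_of_injective_ringHom (C_injective (R := K)) p
  haveI : CharP (Polynomial (Polynomial K)) p :=
    charP_of_injective_ringHom (C_injective (R := Polynomial K)) p
  have part1 : ∀ k l : ℕ, ∀ v : Polynomial (Polynomial K) × Polynomial (Polynomial K),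
      strataOp p a k (strataOp p a l v) =
        (((k + l).choose k : Polynomial (Polynomial K))) • strataOp p a (k + l) v := by
    intro k l v
    obtain ⟨f, g⟩ := v
    simp only [strataOp, Prod.smul_mk, smul_eq_mul, smul_add, Prod.mk.injEq]
    refine ⟨?_, ?_⟩
    · -- first component
      rw [map_add, map_sum, mul_add]
      have e1 : ∑ h ∈ (Finset.range (l + 1)).filter (fun h => p ^ h ≤ l),
          hasseDeriv k (hasseDeriv (l - p ^ h) g *
            Polynomial.C (∏ i ∈ Finset.range (h + 1), (X - Polynomial.C (a i)))) =
          ∑ h ∈ Finset.range (k + l + 1),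
            (if p ^ h ≤ l then (((k + l - p ^ h).choose k : Polynomial (Polynomial K))) else 0) *
              (hasseDeriv (k + l - p ^ h) g *
                Polynomial.C (∏ i ∈ Finset.range (h + 1), (X - Polynomial.C (a i)))) := by
        rw [filt_eq p hp.one_lt (Nat.le_add_left l k), Finset.sum_filter]
        refine Finset.sum_congr rfl fun h _ => ?_
        by_cases hq : p ^ h ≤ l
        · rw [if_pos hq, if_pos hq, hd_mul_C, hd_comp,
            show k + (l - p ^ h) = k + l - p ^ h by omega, nsmul_eq_mul, mul_assoc]
        · rw [if_neg hq, if_neg hq, zero_mul]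
      have e2 : ∑ h ∈ (Finset.range (k + 1)).filter (fun h => p ^ h ≤ k),
          hasseDeriv (k - p ^ h) (hasseDeriv l g) *
            Polynomial.C (∏ i ∈ Finset.range (h + 1), (X - Polynomial.C (a i))) =
          ∑ h ∈ Finset.range (k + l + 1),
            (if p ^ h ≤ k then
              (((k + l - p ^ h).choose (k - p ^ h) : Polynomial (Polynomial K))) else 0) *
              (hasseDeriv (k + l - p ^ h) g *
                Polynomial.C (∏ i ∈ Finset.range (h + 1), (X - Polynomial.C (a i)))) := by
        rw [filt_eq p hp.one_lt (Nat.le_add_right k l), Finset.sum_filter]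
        refine Finset.sum_congr rfl fun h _ => ?_
        by_cases hq : p ^ h ≤ k
        · rw [if_pos hq, if_pos hq, hd_comp,
            show k - p ^ h + l = k + l - p ^ h by omega, nsmul_eq_mul, ← mul_assoc]
        · rw [if_neg hq, if_neg hq, zero_mul]
      have e3 : (((k + l).choose k : Polynomial (Polynomial K))) *
          ∑ h ∈ (Finset.range (k + l + 1)).filter (fun h => p ^ h ≤ k + l),
            hasseDeriv (k + l - p ^ h) g *
              Polynomial.C (∏ i ∈ Finset.range (h + 1), (X - Polynomial.C (a i))) =
          ∑ h ∈ Finset.range (k + l + 1),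
            (if p ^ h ≤ k + l then (((k + l).choose k : Polynomial (Polynomial K))) else 0) *
              (hasseDeriv (k + l - p ^ h) g *
                Polynomial.C (∏ i ∈ Finset.range (h + 1), (X - Polynomial.C (a i)))) := by
        rw [Finset.mul_sum, Finset.sum_filter]
        refine Finset.sum_congr rfl fun h _ => ?_
        by_cases hq : p ^ h ≤ k + l
        · rw [if_pos hq, if_pos hq]
        · rw [if_neg hq, if_neg hq, zero_mul]
      rw [e1, e2, e3, hd_comp, nsmul_eq_mul, add_assoc, ← Finset.sum_add_distrib]
      refine congrArg₂ (· + ·) rfl ?_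
      refine Finset.sum_congr rfl fun h _ => ?_
      rw [← add_mul]
      refine congrArg₂ (· * ·) ?_ rfl
      by_cases hq : p ^ h ≤ k + l
      · rw [if_pos hq, key_choose p hp h (k + l) k hq]
        refine congrArg₂ (· + ·) ?_ rfl
        by_cases hql : p ^ h ≤ l
        · rw [if_pos hql]
        · rw [if_neg hql, Nat.choose_eq_zero_of_lt (by omega), Nat.cast_zero]
      · rw [if_neg hq, if_neg (by omega), if_neg (by omega), add_zero]
    · rw [hd_comp, nsmul_eq_mul]
  refine ⟨part1, fun k l v => ?_, ?_⟩
  · rw [part1, part1, Nat.add_comm l k, Nat.choose_symm_add]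
  · intro k hk v
    obtain ⟨f, g⟩ := v
    obtain ⟨m, rfl⟩ : ∃ m, k = m + 1 := ⟨k - 1, by omega⟩
    simp only [strataOp, Prod.mk_add_mk, Prod.mk.injEq, Nat.add_sub_cancel]
    refine ⟨?_, ?_⟩
    · have eL : ∑ h ∈ (Finset.range (m + 1 + 1)).filter (fun h => p ^ h ≤ m + 1),
          hasseDeriv (m + 1 - p ^ h) (X * g) *
            Polynomial.C (∏ i ∈ Finset.range (h + 1), (X - Polynomial.C (a i))) =
          X * (∑ h ∈ (Finset.range (m + 1 + 1)).filter (fun h => p ^ h ≤ m + 1),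
              hasseDeriv (m + 1 - p ^ h) g *
                Polynomial.C (∏ i ∈ Finset.range (h + 1), (X - Polynomial.C (a i)))) +
            ∑ h ∈ (Finset.range (m + 1)).filter (fun h => p ^ h ≤ m),
              hasseDeriv (m - p ^ h) g *
                Polynomial.C (∏ i ∈ Finset.range (h + 1), (X - Polynomial.C (a i))) := by
        have step : ∀ h ∈ (Finset.range (m + 1 + 1)).filter (fun h => p ^ h ≤ m + 1),
            hasseDeriv (m + 1 - p ^ h) (X * g) *
              Polynomial.C (∏ i ∈ Finset.range (h + 1), (X - Polynomial.C (a i))) =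
            X * (hasseDeriv (m + 1 - p ^ h) g *
              Polynomial.C (∏ i ∈ Finset.range (h + 1), (X - Polynomial.C (a i)))) +
            (if p ^ h ≤ m then hasseDeriv (m - p ^ h) g *
              Polynomial.C (∏ i ∈ Finset.range (h + 1), (X - Polynomial.C (a i))) else 0) := by
          intro h hh
          rw [hd_X_mul, add_mul, mul_assoc]
          refine congrArg₂ (· + ·) rfl ?_
          by_cases hqm : p ^ h ≤ m
          · rw [if_neg (by omega), if_pos hqm,
              show m + 1 - p ^ h - 1 = m - p ^ h by omega]
          · have h0 : m + 1 - p ^ h = 0 := by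
              simp only [Finset.mem_filter, Finset.mem_range] at hh
              omega
            rw [h0, if_pos rfl, if_neg hqm, zero_mul]
        rw [Finset.sum_congr rfl step, Finset.sum_add_distrib, ← Finset.mul_sum]
        refine congrArg₂ (· + ·) rfl ?_
        rw [← Finset.sum_filter, Finset.filter_filter,
          filt_eq p hp.one_lt (Nat.le_succ m)]
        refine Finset.sum_congr ?_ fun _ _ => rfl
        refine Finset.filter_congr fun x _ => ?_
        constructor
        · rintro ⟨_, h2⟩; exact h2
        · intro h2; exact ⟨by omega, h2⟩
      rw [hd_X_mul, eL]
      simp only [Nat.succ_ne_zero, if_false, Nat.add_sub_cancel]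
      ring
    · rw [hd_X_mul]
      simp only [Nat.succ_ne_zero, if_false, Nat.add_sub_cancel]
end

section
/- Let p be a prime, K a field of characteristic p, n ∈ ℕ, and a_0, …, a_n ∈ K. Define the polynomial w = Σ_{j=0}^{n−1} ( ∏_{i=0}^{j} (a_n − a_i) ) · x^{p^j} ∈ K[x]. Then: (i) for every h ∈ ℕ, the p^h-th Hasse derivative of w is the constant polynomial ∏_{i=0}^{h} (a_n − a_i), where for h ≥ n this product is 0 because its factor with i = n vanishes; and (ii) for every k ≥ 1 that is not a power of p, the k-th Hasse derivative of w is 0. -/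
open Polynomial

lemma hasseDeriv_Xpow_ne {p : ℕ} (hp : p.Prime) {K : Type*} [Field K] [CharP K p]
    {k j : ℕ} (hk : k ≠ 0) (hkj : k ≠ p ^ j) (c : K) :
    Polynomial.hasseDeriv k (Polynomial.C c * Polynomial.X ^ (p ^ j)) = 0 := by
  rw [Polynomial.C_mul_X_pow_eq_monomial, Polynomial.hasseDeriv_monomial]
  have : p ∣ (p ^ j).choose k := Nat.Prime.dvd_choose_pow hp hk hkj
  rw [(CharP.cast_eq_zero_iff K p _).mpr this, zero_mul, Polynomial.monomial_zero_right]

/-- Let `p` be a prime, `K` a field of characteristic `p`, `n : ℕ`,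
and `a₀, …, a_n ∈ K` (given as `a : ℕ → K`).  Let
`w = Σ_{j=0}^{n-1} (∏_{i=0}^{j} (a_n - a i)) · x^{p^j} ∈ K[x]`.  Then:
(i) for every `h`, the `p^h`-th Hasse derivative of `w` is the constant
`∏_{i=0}^{h} (a_n - a_i)` (which vanishes for `h ≥ n` because of the factor `i = n`);
(ii) for every `k ≥ 1` that is not a power of `p`, the `k`-th Hasse derivative of `w`
is `0`. -/
theorem hasseDeriv_counterexample_gauge
    (p : ℕ) (hp : p.Prime) (K : Type*) [Field K] [CharP K p] (n : ℕ) (a : ℕ → K) :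
    (∀ h : ℕ,
      Polynomial.hasseDeriv (p ^ h)
          (∑ j ∈ Finset.range n,
            Polynomial.C (∏ i ∈ Finset.range (j + 1), (a n - a i)) *
              Polynomial.X ^ (p ^ j)) =
        Polynomial.C (∏ i ∈ Finset.range (h + 1), (a n - a i))) ∧
    (∀ k : ℕ, 1 ≤ k → (¬ ∃ j : ℕ, k = p ^ j) →
      Polynomial.hasseDeriv k
          (∑ j ∈ Finset.range n,
            Polynomial.C (∏ i ∈ Finset.range (j + 1), (a n - a i)) *
              Polynomial.X ^ (p ^ j)) = 0) := by
  have hppos : p ≠ 0 := hp.pos.ne'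
  constructor
  · intro h
    rw [map_sum]
    by_cases hn : h < n
    · rw [Finset.sum_eq_single h]
      · rw [Polynomial.C_mul_X_pow_eq_monomial, Polynomial.hasseDeriv_monomial,
          Nat.choose_self, Nat.cast_one, one_mul, Nat.sub_self,
          Polynomial.monomial_zero_left]
      · intro j _ hjh
        exact hasseDeriv_Xpow_ne hp (pow_ne_zero _ hppos)
          (fun e => hjh (Nat.pow_right_injective hp.two_le e).symm) _
      · intro habs; exact absurd (Finset.mem_range.mpr hn) habs
    · have : (∏ i ∈ Finset.range (h + 1), (a n - a i)) = 0 := by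
        apply Finset.prod_eq_zero (Finset.mem_range.mpr (Nat.lt_succ_of_le (le_of_not_gt hn)))
        simp
      rw [this, map_zero]
      apply Finset.sum_eq_zero
      intro j hj
      refine hasseDeriv_Xpow_ne hp (pow_ne_zero _ hppos) (fun e => ?_) _
      have := Nat.pow_right_injective hp.two_le e
      have := Finset.mem_range.mp hj
      omega
  · intro k hk hnot
    rw [map_sum]
    apply Finset.sum_eq_zero
    intro j _
    exact hasseDeriv_Xpow_ne hp (by omega) (fun e => hnot ⟨j, e⟩) _
end
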